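/- More generally, if z = x(1 - g x^h) then A_h(g z^h) = (1 - g x^h)^{-1} and z·(A_h(g z^h) - 1) = g x^{h+1}, as identities of formal power series in x over the parameter g. -/

import Mathlib

/-- Composition `f ∘ g` of formal power series, valid when `g` has zero
constant term (in that case `coeff n (g^k) = 0` for `k > n`). -/
noncomputable def pscomp {R : Type*} [CommSemiring R] (f g : PowerSeries R) :
    PowerSeries R :=
  PowerSeries.mk fun n =>
    ∑ k ∈ Finset.range (n + 1), PowerSeries.coeff k f * PowerSeries.coeff n (g ^ k)

/-- The generating function of the generalized Catalan numbers, with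
coefficients viewed in `ℚ[g]`. -/
noncomputable def genCatalanGF (h : ℕ) : PowerSeries (Polynomial ℚ) :=
  PowerSeries.mk fun n =>
    Polynomial.C ((1 / ((h : ℚ) * n + 1)) * (Nat.choose ((h + 1) * n) n : ℚ))


/-- Generalized binomial coefficient over ℚ. -/
noncomputable def gb (x : ℚ) (k : ℕ) : ℚ :=
  (∏ i ∈ Finset.range k, (x - i)) / (Nat.factorial k)

lemma gb_zero (x : ℚ) : gb x 0 = 1 := by simp [gb]

lemma prod_shift (x : ℚ) (k : ℕ) :
    (∏ i ∈ Finset.range (k+1), (x + 1 - i)) = (x+1) * ∏ i ∈ Finset.range k, (x - i) := by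
  rw [Finset.prod_range_succ']
  have e0 : x + 1 - (0:ℕ) = x + 1 := by norm_num
  rw [e0, mul_comm]
  congr 1
  apply Finset.prod_congr rfl
  intro i _
  push_cast
  ring

lemma gb_pascal (x : ℚ) (k : ℕ) : gb (x+1) (k+1) = gb x (k+1) + gb x k := by
  unfold gb
  rw [prod_shift, Finset.prod_range_succ, Nat.factorial_succ]
  have hk : (Nat.factorial k : ℚ) ≠ 0 := by exact_mod_cast (Nat.factorial_pos k).ne'
  have hk1 : ((k:ℚ) + 1) ≠ 0 := by positivity
  push_cast
  field_simp
  ring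

lemma gb_nat (N k : ℕ) : gb (N : ℚ) k = (N.choose k : ℚ) := by
  induction N generalizing k with
  | zero =>
    cases k with
    | zero => simp [gb]
    | succ k =>
      simp only [gb]
      rw [Finset.prod_eq_zero (Finset.mem_range.2 (Nat.succ_pos k))]
      · simp [Nat.choose_eq_zero_of_lt (Nat.succ_pos k)]
      · simp
  | succ N ih =>
    cases k with
    | zero => simp [gb]
    | succ k =>
      have : ((N:ℚ) + 1) = (N:ℚ) + 1 := rfl
      push_cast
      rw [gb_pascal, ih, ih, Nat.choose_succ_succ]
      push_cast
      ring

lemma gb_reflect (c j : ℕ) : gb ((j:ℚ) - c - 1) j = (-1)^j * (c.choose j : ℚ) := by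
  have : (∏ i ∈ Finset.range j, ((j:ℚ) - c - 1 - i))
      = ∏ i ∈ Finset.range j, (((j:ℚ) - 1 - i) - c) := by
    apply Finset.prod_congr rfl; intro i _; ring
  rw [gb, this]
  have h2 : (∏ i ∈ Finset.range j, (((j:ℚ) - 1 - i) - c))
      = ∏ i ∈ Finset.range j, ((i:ℚ) - c) := by
    rw [← Finset.prod_range_reflect]
    apply Finset.prod_congr rfl
    intro i hi
    have hi' := Finset.mem_range.1 hi
    have e1 : j - 1 - i = j - (1 + i) := by omega
    rw [e1, Nat.cast_sub (by omega : 1 + i ≤ j)]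
    push_cast
    ring
  rw [h2]
  have h3 : (∏ i ∈ Finset.range j, ((i:ℚ) - c)) = (-1)^j * ∏ i ∈ Finset.range j, ((c:ℚ) - i) := by
    rw [show ((-1:ℚ))^j = ∏ _i ∈ Finset.range j, (-1:ℚ) by simp, ← Finset.prod_mul_distrib]
    apply Finset.prod_congr rfl
    intro i _
    ring
  rw [h3, mul_div_assoc]
  congr 1
  have := gb_nat c j
  rw [gb] at this
  exact this

/-- Gould polynomial values `x/(x+(h+1)k) * C(x+(h+1)k, k)`. -/
noncomputable def gA (h : ℕ) : ℕ → ℚ → ℚ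
  | 0, _ => 1
  | (k+1), x => x * gb (x + ((h:ℚ)+1)*(k+1) - 1) k / (k+1)

lemma gA_zero (h : ℕ) (x : ℚ) : gA h 0 x = 1 := rfl

lemma gA_rec (h k : ℕ) (x : ℚ) :
    gA h (k+1) x = gA h (k+1) (x-1) + gA h k (x + h) := by
  cases k with
  | zero =>
    simp only [gA, gb_zero]
    push_cast
    ring
  | succ k =>
    simp only [gA, gb]
    have r1 : ∏ i ∈ Finset.range (k + 1), (x + ((h:ℚ) + 1) * (↑(k + 1) + 1) - 1 - ↑i)
        = (x + ((h:ℚ)+1)*(k+2) - 1) * ∏ i ∈ Finset.range k, (x + ((h:ℚ)+1)*(k+2) - 2 - ↑i) := by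
      rw [Finset.prod_range_succ']
      rw [Finset.prod_congr rfl (fun i (_ : i ∈ Finset.range k) =>
        (by push_cast; ring :
          x + ((h:ℚ) + 1) * (↑(k + 1) + 1) - 1 - ↑(i+1) = x + ((h:ℚ)+1)*(k+2) - 2 - ↑i))]
      push_cast
      ring
    have r2 : ∏ i ∈ Finset.range (k + 1), (x - 1 + ((h:ℚ) + 1) * (↑(k + 1) + 1) - 1 - ↑i)
        = (∏ i ∈ Finset.range k, (x + ((h:ℚ)+1)*(k+2) - 2 - ↑i))
            * (x + ((h:ℚ)+1)*(k+2) - 2 - ↑k) := by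
      rw [Finset.prod_range_succ]
      rw [Finset.prod_congr rfl (fun i (_ : i ∈ Finset.range k) =>
        (by push_cast; ring :
          x - 1 + ((h:ℚ) + 1) * (↑(k + 1) + 1) - 1 - ↑i = x + ((h:ℚ)+1)*(k+2) - 2 - ↑i))]
      push_cast
      ring
    have r3 : ∏ i ∈ Finset.range k, (x + (h:ℚ) + ((h:ℚ) + 1) * (↑k + 1) - 1 - ↑i)
        = ∏ i ∈ Finset.range k, (x + ((h:ℚ)+1)*(k+2) - 2 - ↑i) :=
      Finset.prod_congr rfl (fun i (_ : i ∈ Finset.range k) =>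
        (by push_cast; ring :
          x + (h:ℚ) + ((h:ℚ) + 1) * (↑k + 1) - 1 - ↑i = x + ((h:ℚ)+1)*(k+2) - 2 - ↑i))
    rw [r1, r2, r3]
    generalize (∏ i ∈ Finset.range k, (x + ((h:ℚ)+1)*(k+2) - 2 - ↑i)) = P
    have efac : ((Nat.factorial (k+1) : ℚ)) = ((k:ℚ)+1) * (Nat.factorial k : ℚ) := by
      rw [Nat.factorial_succ]; push_cast; ring
    have hf0 : ((Nat.factorial k : ℚ)) ≠ 0 := by exact_mod_cast (Nat.factorial_pos _).ne'
    have hc1 : ((k:ℚ)+1) ≠ 0 := by positivity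
    have hc2 : ((k:ℚ)+1+1) ≠ 0 := by positivity
    rw [efac]
    push_cast
    field_simp
    ring

noncomputable def gH (h m : ℕ) (x y : ℚ) : ℚ :=
  ∑ k ∈ Finset.range (m+1), gA h k x * gb (y + ((h:ℚ)+1) * ((m-k : ℕ) : ℚ)) (m-k)

lemma gA_x_zero (h k : ℕ) : gA h (k+1) 0 = 0 := by simp [gA]

lemma gH_x_zero (h m : ℕ) (y : ℚ) :
    gH h m 0 y = gb (y + ((h:ℚ)+1) * m) m := by
  unfold gH
  rw [Finset.sum_eq_single 0]
  · simp [gA_zero]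
  · intro k _ hk
    obtain ⟨k', rfl⟩ := Nat.exists_eq_succ_of_ne_zero hk
    rw [gA_x_zero]
    ring
  · intro habs
    exact absurd (Finset.mem_range.2 (Nat.succ_pos m)) habs

lemma gH_step (h m : ℕ) (x y : ℚ) :
    gH h (m+1) (x+1) y = gH h (m+1) x y + gH h m (x+1+(h:ℚ)) y := by
  unfold gH
  rw [Finset.sum_range_succ' (fun k => gA h k (x+1) * gb (y + ((h:ℚ)+1) * (((m+1)-k : ℕ) : ℚ)) ((m+1)-k)),
      Finset.sum_range_succ' (fun k => gA h k x * gb (y + ((h:ℚ)+1) * (((m+1)-k : ℕ) : ℚ)) ((m+1)-k))]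
  have key : ∀ i ∈ Finset.range (m+1),
      gA h (i+1) (x+1) * gb (y + ((h:ℚ)+1) * (((m+1)-(i+1) : ℕ) : ℚ)) ((m+1)-(i+1))
      = gA h (i+1) x * gb (y + ((h:ℚ)+1) * (((m+1)-(i+1) : ℕ) : ℚ)) ((m+1)-(i+1))
        + gA h i (x+1+(h:ℚ)) * gb (y + ((h:ℚ)+1) * ((m-i : ℕ) : ℚ)) (m-i) := by
    intro i _
    have hrec := gA_rec h i (x+1)
    have hx : x + 1 - 1 = x := by ring
    rw [hx] at hrec
    have hsub : (m+1) - (i+1) = m - i := by omega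
    rw [hsub, hrec]
    ring
  rw [Finset.sum_congr rfl key, Finset.sum_add_distrib]
  simp only [gA_zero, one_mul]
  ring

lemma gH_main (h : ℕ) : ∀ m : ℕ, ∀ x : ℕ, ∀ y : ℚ,
    gH h m x y = gb ((x:ℚ) + y + ((h:ℚ)+1) * m) m := by
  intro m
  induction m with
  | zero =>
    intro x y
    simp [gH, gA_zero, gb_zero]
  | succ m ih =>
    intro x
    induction x with
    | zero =>
      intro y
      rw [Nat.cast_zero, gH_x_zero]
      ring_nf
    | succ x ihx =>
      intro y
      have : ((x+1 : ℕ) : ℚ) = (x:ℚ) + 1 := by push_cast; ring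
      rw [this, gH_step, ihx y]
      have h2 : gH h m ((x:ℚ)+1+(h:ℚ)) y = gb (((x+1+h : ℕ):ℚ) + y + ((h:ℚ)+1) * m) m := by
        have := ih (x+1+h) y
        rw [show (((x+1+h : ℕ)):ℚ) = (x:ℚ)+1+(h:ℚ) by push_cast; ring] at this
        rw [this]
        push_cast
        ring_nf
      rw [h2]
      have hp := gb_pascal ((x:ℚ) + y + ((h:ℚ)+1) * (m+1)) m
      have e1 : ((x+1+h:ℕ):ℚ) + y + ((h:ℚ)+1) * m = (x:ℚ) + y + ((h:ℚ)+1) * (m+1) := by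
        push_cast; ring
      have e2 : (x:ℚ) + 1 + y + ((h:ℚ)+1) * ((m:ℚ)+1) = ((x:ℚ) + y + ((h:ℚ)+1) * (m+1)) + 1 := by
        ring
      rw [e1]
      push_cast
      rw [e2, hp]

lemma gA_one (h k : ℕ) : gA h k 1 = (1 / ((h:ℚ) * k + 1)) * (Nat.choose ((h+1)*k) k : ℚ) := by
  cases k with
  | zero => simp [gA_zero]
  | succ k =>
    have e0 : (1:ℚ) + ((h:ℚ)+1)*(k+1) - 1 = (((h+1)*(k+1) : ℕ) : ℚ) := by push_cast; ring
    simp only [gA, one_mul]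
    rw [e0, gb_nat]
    have hch := Nat.choose_succ_right_eq ((h+1)*(k+1)) k
    have hsub : (h+1)*(k+1) - k = h*(k+1)+1 := by ring_nf; omega
    rw [hsub] at hch
    have hd1 : ((k:ℚ)+1) ≠ 0 := by positivity
    have hd2 : ((h:ℚ) * ((k:ℕ)+1) + 1) ≠ 0 := by positivity
    rw [div_eq_iff hd1]
    have hchq : (Nat.choose ((h+1)*(k+1)) (k+1) : ℚ) * ((k:ℚ)+1)
        = (Nat.choose ((h+1)*(k+1)) k : ℚ) * ((h:ℚ)*((k:ℚ)+1)+1) := by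
      exact_mod_cast congrArg (Nat.cast : ℕ → ℚ) hch
    push_cast
    field_simp
    linarith [hchq]

lemma T_one (h m : ℕ) :
    ∑ k ∈ Finset.range (m+1),
      ((-1:ℚ))^(m-k) * ((1 / ((h:ℚ) * k + 1)) * (Nat.choose ((h+1)*k) k : ℚ))
        * (Nat.choose (h*k) (m-k) : ℚ) = 1 := by
  have key := gH_main h m 1 (-(((h:ℚ)) * m) - 1)
  unfold gH at key
  rw [Nat.cast_one] at key
  have e : ∀ k ∈ Finset.range (m+1),
      gA h k 1 * gb ((-(((h:ℚ)) * m) - 1) + ((h:ℚ)+1) * ((m-k : ℕ) : ℚ)) (m-k)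
      = ((-1:ℚ))^(m-k) * ((1 / ((h:ℚ) * k + 1)) * (Nat.choose ((h+1)*k) k : ℚ))
          * (Nat.choose (h*k) (m-k) : ℚ) := by
    intro k hk
    have hkm : k ≤ m := Nat.lt_succ_iff.1 (Finset.mem_range.1 hk)
    have earg : (-(((h:ℚ)) * m) - 1) + ((h:ℚ)+1) * ((m-k : ℕ) : ℚ)
        = (((m-k:ℕ)):ℚ) - ((h*k : ℕ) : ℚ) - 1 := by
      rw [Nat.cast_sub hkm]
      push_cast
      ring
    rw [earg, gb_reflect (h*k) (m-k), gA_one]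
    ring
  rw [Finset.sum_congr rfl e] at key
  rw [key]
  have : (1:ℚ) + (-(((h:ℚ)) * m) - 1) + ((h:ℚ)+1) * m = ((m:ℕ):ℚ) := by push_cast; ring
  rw [this, gb_nat, Nat.choose_self, Nat.cast_one]
section PS

local notation "Rq" => Polynomial ℚ
local notation "Cg" => PowerSeries.C (R := Polynomial ℚ) Polynomial.X

lemma G_pow_eq (h k : ℕ) :
    (Cg * (PowerSeries.X * (1 - Cg * PowerSeries.X ^ h)) ^ h) ^ k
      = ∑ j ∈ Finset.range (h*k+1),
          PowerSeries.C (R := Rq) (Polynomial.C ((-1:ℚ)^j * (Nat.choose (h*k) j : ℚ))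
              * Polynomial.X ^ (k+j))
            * PowerSeries.X ^ (h*(k+j)) := by
  have e1 : (Cg * (PowerSeries.X * (1 - Cg * PowerSeries.X ^ h)) ^ h) ^ k
      = Cg^k * PowerSeries.X^(h*k)
        * ((-(Cg * PowerSeries.X^h) + 1)) ^ (h*k) := by
    rw [mul_pow, ← pow_mul, mul_pow, sub_eq_neg_add]
    ring
  rw [e1, add_pow, Finset.mul_sum]
  apply Finset.sum_congr rfl
  intro j _
  rw [one_pow, mul_one]
  have h1 : (-(Cg * PowerSeries.X^h) : PowerSeries Rq)^j
      = PowerSeries.C (R := Rq) ((-Polynomial.X)^j) * PowerSeries.X^(h*j) := by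
    rw [show (-(Cg * PowerSeries.X^h) : PowerSeries Rq)
        = PowerSeries.C (R := Rq) (-Polynomial.X) * PowerSeries.X^h by rw [map_neg]; ring,
      mul_pow, ← map_pow, ← pow_mul]
  rw [h1, show ((Nat.choose (h*k) j : ℕ) : PowerSeries Rq)
      = PowerSeries.C (R := Rq) ((Nat.choose (h*k) j : ℕ) : Polynomial ℚ) from (map_natCast _ _).symm,
    show (Cg^k : PowerSeries Rq) = PowerSeries.C (R := Rq) (Polynomial.X^k) from (map_pow _ _ _).symm]
  have e2 : (PowerSeries.C (R := Rq) (Polynomial.X^k)) * PowerSeries.X^(h*k)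
        * (PowerSeries.C (R := Rq) ((-Polynomial.X)^j) * PowerSeries.X^(h*j)
            * PowerSeries.C (R := Rq) ((Nat.choose (h*k) j : ℕ) : Polynomial ℚ))
      = PowerSeries.C (R := Rq) (Polynomial.X^k * (-Polynomial.X)^j
            * ((Nat.choose (h*k) j : ℕ) : Polynomial ℚ))
        * (PowerSeries.X^(h*k) * PowerSeries.X^(h*j)) := by
    rw [map_mul, map_mul]
    ring
  rw [e2, ← pow_add, ← Nat.left_distrib]
  congr 1
  rw [show ((Nat.choose (h*k) j : ℕ) : Polynomial ℚ)
      = Polynomial.C ((Nat.choose (h*k) j : ℕ) : ℚ) from (map_natCast _ _).symm,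
    show Polynomial.C ((-1:ℚ)^j * (Nat.choose (h*k) j : ℚ))
      = Polynomial.C ((-1:ℚ))^j * Polynomial.C ((Nat.choose (h*k) j : ℕ) : ℚ) by
        rw [map_mul, map_pow]]
  have : (-Polynomial.X : Polynomial ℚ)^j = Polynomial.C (-1:ℚ)^j * Polynomial.X^j := by
    rw [neg_pow]
    simp
  rw [this]
  ring

lemma coeff_G_pow (h k n : ℕ) :
    PowerSeries.coeff n ((Cg * (PowerSeries.X * (1 - Cg * PowerSeries.X ^ h)) ^ h) ^ k)
      = ∑ j ∈ Finset.range (h*k+1),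
          if n = h*(k+j) then Polynomial.C ((-1:ℚ)^j * (Nat.choose (h*k) j : ℚ))
            * Polynomial.X ^ (k+j) else 0 := by
  rw [G_pow_eq, map_sum]
  exact Finset.sum_congr rfl fun j _ => PowerSeries.coeff_C_mul_X_pow _ _ _

lemma coeff_G_pow_mul (h : ℕ) (hh : 0 < h) (m k : ℕ) :
    PowerSeries.coeff (h*m) ((Cg * (PowerSeries.X * (1 - Cg * PowerSeries.X ^ h)) ^ h) ^ k)
      = if k ≤ m then Polynomial.C ((-1:ℚ)^(m-k) * (Nat.choose (h*k) (m-k) : ℚ))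
          * Polynomial.X ^ m else 0 := by
  rw [coeff_G_pow]
  by_cases hkm : k ≤ m
  · rw [if_pos hkm]
    have cond : ∀ j, (h*m = h*(k+j)) ↔ (j = m - k) := by
      intro j
      constructor
      · intro hj
        have := Nat.eq_of_mul_eq_mul_left hh hj
        omega
      · intro hj
        subst hj
        congr 1
        omega
    rw [Finset.sum_congr rfl (fun j _ => by rw [if_congr (cond j) rfl rfl]),
      Finset.sum_ite_eq' (Finset.range (h*k+1)) (m-k)]
    by_cases hj : m - k ∈ Finset.range (h*k+1)
    · rw [if_pos hj, show k + (m-k) = m from by omega]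
    · rw [if_neg hj]
      have : Nat.choose (h*k) (m-k) = 0 :=
        Nat.choose_eq_zero_of_lt (by simp only [Finset.mem_range] at hj; omega)
      rw [this]
      simp
  · rw [if_neg hkm]
    apply Finset.sum_eq_zero
    intro j _
    rw [if_neg]
    intro hcontra
    have := Nat.eq_of_mul_eq_mul_left hh hcontra
    omega

lemma coeff_B (h : ℕ) (hh : 0 < h) (n : ℕ) :
    PowerSeries.coeff n (pscomp (genCatalanGF h)
        (Cg * (PowerSeries.X * (1 - Cg * PowerSeries.X ^ h)) ^ h))
      = if h ∣ n then Polynomial.X ^ (n / h) else 0 := by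
  rw [pscomp, PowerSeries.coeff_mk]
  by_cases hdvd : h ∣ n
  · obtain ⟨m, rfl⟩ := hdvd
    rw [if_pos ⟨m, rfl⟩, Nat.mul_div_cancel_left m hh]
    have hsub : Finset.range (m+1) ⊆ Finset.range (h*m+1) := by
      apply Finset.range_subset_range.2
      have : m ≤ h * m := Nat.le_mul_of_pos_left m hh
      omega
    rw [Finset.sum_congr rfl (fun k _ => by
      rw [coeff_G_pow_mul h hh m k, genCatalanGF, PowerSeries.coeff_mk])]
    rw [← Finset.sum_subset hsub (by
      intro k _ hk
      rw [if_neg (by simp only [Finset.mem_range] at hk; omega : ¬ k ≤ m)]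
      exact mul_zero _)]
    have e : ∀ k ∈ Finset.range (m+1),
        Polynomial.C ((1 / ((h : ℚ) * k + 1)) * (Nat.choose ((h + 1) * k) k : ℚ))
          * (if k ≤ m then Polynomial.C ((-1:ℚ)^(m-k) * (Nat.choose (h*k) (m-k) : ℚ))
              * Polynomial.X ^ m else 0)
        = Polynomial.C ((-1:ℚ)^(m-k)
            * ((1 / ((h : ℚ) * k + 1)) * (Nat.choose ((h + 1) * k) k : ℚ))
            * (Nat.choose (h*k) (m-k) : ℚ)) * Polynomial.X ^ m := by
      intro k hk
      rw [if_pos (Nat.lt_succ_iff.1 (Finset.mem_range.1 hk)), ← mul_assoc, ← map_mul]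
      congr 1
      congr 1
      ring
    rw [Finset.sum_congr rfl e, ← Finset.sum_mul, ← map_sum, T_one h m, map_one, one_mul]
  · rw [if_neg hdvd]
    apply Finset.sum_eq_zero
    intro k _
    rw [coeff_G_pow]
    rw [Finset.sum_eq_zero (fun j _ => by
      rw [if_neg (fun hc => hdvd ⟨k+j, hc⟩)])]
    exact mul_zero _

/-- With `z = x (1 - g x^h)` (where `g` is a formal parameter), one has
`A_h(g z^h) = (1 - g x^h)⁻¹` and `z (A_h(g z^h) - 1) = g x^{h+1}`, as
identities of formal power series in `x` over `ℚ[g]`. -/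
theorem genCatalanGF_parametric_general (h : ℕ) (hh : 0 < h) :
    pscomp (genCatalanGF h)
        (PowerSeries.C (R := Polynomial ℚ) Polynomial.X *
          (PowerSeries.X *
            (1 - PowerSeries.C (R := Polynomial ℚ) Polynomial.X * PowerSeries.X ^ h)) ^ h) *
      (1 - PowerSeries.C (R := Polynomial ℚ) Polynomial.X * PowerSeries.X ^ h) = 1 ∧
    PowerSeries.X *
        (1 - PowerSeries.C (R := Polynomial ℚ) Polynomial.X * PowerSeries.X ^ h) *
        (pscomp (genCatalanGF h)
          (PowerSeries.C (R := Polynomial ℚ) Polynomial.X *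
            (PowerSeries.X *
              (1 - PowerSeries.C (R := Polynomial ℚ) Polynomial.X * PowerSeries.X ^ h)) ^ h) - 1) =
      PowerSeries.C (R := Polynomial ℚ) Polynomial.X * PowerSeries.X ^ (h + 1) := by
  set B := pscomp (genCatalanGF h)
      (Cg * (PowerSeries.X * (1 - Cg * PowerSeries.X ^ h)) ^ h) with hB
  have goal1 : B * (1 - Cg * PowerSeries.X ^ h) = 1 := by
    refine PowerSeries.ext fun n => ?_
    have emul : B * (1 - Cg * PowerSeries.X ^ h)
        = B - Cg * (B * PowerSeries.X ^ h) := by ring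
    rw [emul, map_sub, PowerSeries.coeff_C_mul, PowerSeries.coeff_mul_X_pow' B h n,
      coeff_B h hh n]
    by_cases hn0 : n = 0
    · subst hn0
      rw [if_pos (dvd_zero h), if_neg (by omega : ¬ h ≤ 0)]
      simp
    · rw [PowerSeries.coeff_one, if_neg hn0]
      by_cases hdvd : h ∣ n
      · obtain ⟨m, rfl⟩ := hdvd
        have hm : 1 ≤ m := by
          rcases Nat.eq_zero_or_pos m with hm0 | hm0
          · exact absurd (by rw [hm0, Nat.mul_zero]) hn0
          · exact hm0
        have hhn : h ≤ h * m := Nat.le_mul_of_pos_right h hm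
        obtain ⟨m', rfl⟩ : ∃ m', m = m'+1 := ⟨m-1, by omega⟩
        have e1 : h * (m'+1) - h = h * m' := by rw [Nat.mul_succ]; omega
        rw [if_pos (show h ∣ h*(m'+1) from ⟨m'+1, rfl⟩), if_pos hhn,
          coeff_B h hh (h*(m'+1) - h), e1, if_pos (show h ∣ h*m' from ⟨m', rfl⟩),
          Nat.mul_div_cancel_left _ hh, Nat.mul_div_cancel_left _ hh, pow_succ]
        ring
      · rw [if_neg hdvd]
        by_cases hhn : h ≤ n
        · rw [if_pos hhn, coeff_B h hh (n - h)]
          rw [if_neg (fun hc => hdvd (by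
            obtain ⟨t, ht⟩ := hc
            exact ⟨t + 1, by rw [Nat.mul_succ]; omega⟩))]
          simp
        · rw [if_neg hhn]
          simp
  constructor
  · exact goal1
  · have expand : PowerSeries.X * (1 - Cg * PowerSeries.X ^ h) * (B - 1)
        = PowerSeries.X * (B * (1 - Cg * PowerSeries.X ^ h))
          - PowerSeries.X * (1 - Cg * PowerSeries.X ^ h) := by ring
    rw [expand, goal1, mul_one]
    rw [pow_succ]
    ring

end PS
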